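/- Let ζ be a q-cycle with Z₂ coefficients (q > 0) of a simplicial complex. Then for any q-simplex σ of ζ, there exists a q-cycle ζ' with Z₂ coefficients such that σ ∈ ζ', ζ' ⊆ ζ, and ζ' is q-connected (any two q-simplices of ζ' are joined by a sequence of q-simplices in ζ' where consecutive simplices share a (q−1)-face). -/

import Mathlib

open Finset

variable {V : Type*} [DecidableEq V]

/-- The codimension-one faces of a simplex. -/
def facetsOf (σ : Finset V) : Finset (Finset V) :=
  σ.powerset.filter (fun τ => τ.card + 1 = σ.card)

/-- The mod-2 (ℤ₂) boundary of a chain of simplices. -/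
def bdry (C : Finset (Finset V)) : Finset (Finset V) :=
  (C.biUnion facetsOf).filter (fun τ => Odd ((C.filter (fun s => τ ∈ facetsOf s)).card))

/-- Connectivity of simplices inside a set Z of simplices via shared faces of k vertices. -/
def ConnIn (k : ℕ) (Z : Finset (Finset V)) : Finset V → Finset V → Prop :=
  Relation.ReflTransGen
    (fun a b => a ∈ Z ∧ b ∈ Z ∧ ∃ ρ : Finset V, ρ.card = k ∧ ρ ⊆ a ∧ ρ ⊆ b)

/-- Any q-simplex σ of a ℤ₂ q-cycle ζ (q > 0) lies in a q-connected sub-cycle ζ' ⊆ ζ. -/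
theorem stmt4 {q : ℕ} (hq : 0 < q) (K : Finset (Finset V))
    (hK : ∀ σ ∈ K, ∀ τ ⊆ σ, τ ∈ K)
    (ζ : Finset (Finset V)) (hζ : ∀ τ ∈ ζ, τ ∈ K ∧ τ.card = q + 1)
    (hcyc : bdry ζ = ∅) (σ : Finset V) (hσ : σ ∈ ζ) :
    ∃ ζ' ⊆ ζ, σ ∈ ζ' ∧ bdry ζ' = ∅ ∧ ∀ τ₁ ∈ ζ', ∀ τ₂ ∈ ζ', ConnIn q ζ' τ₁ τ₂ := by
  classical
  set R : Finset V → Finset V → Prop :=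
    fun a b => a ∈ ζ ∧ b ∈ ζ ∧ ∃ ρ : Finset V, ρ.card = q ∧ ρ ⊆ a ∧ ρ ⊆ b with hR
  have hRsymm : Symmetric R := by
    rintro a b ⟨ha, hb, ρ, hc, hra, hrb⟩
    exact ⟨hb, ha, ρ, hc, hrb, hra⟩
  set ζ' : Finset (Finset V) := ζ.filter (fun τ => ConnIn q ζ σ τ) with hζ'
  have hsub : ζ' ⊆ ζ := filter_subset _ _
  have hmem : ∀ τ, τ ∈ ζ' ↔ τ ∈ ζ ∧ ConnIn q ζ σ τ := by
    intro τ; simp [hζ']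
  -- lifting connectivity to ζ'
  have hlift : ∀ τ, ConnIn q ζ σ τ → ConnIn q ζ' σ τ := by
    intro τ h
    induction h with
    | refl => exact Relation.ReflTransGen.refl
    | tail hab hbc ih =>
      rename_i a b
      obtain ⟨ha, hb, ρ, hc, hra, hrb⟩ := hbc
      have ha' : a ∈ ζ' := (hmem a).2 ⟨ha, hab⟩
      have hb' : b ∈ ζ' := (hmem b).2 ⟨hb, hab.tail ⟨ha, hb, ρ, hc, hra, hrb⟩⟩
      exact ih.tail ⟨ha', hb', ρ, hc, hra, hrb⟩
  refine ⟨ζ', hsub, (hmem σ).2 ⟨hσ, Relation.ReflTransGen.refl⟩, ?_, ?_⟩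
  · -- boundary is empty
    by_contra h
    obtain ⟨τ, hτ⟩ := Finset.nonempty_iff_ne_empty.2 h
    rw [bdry, mem_filter, mem_biUnion] at hτ
    obtain ⟨⟨s₀, hs₀, hτs₀⟩, hodd⟩ := hτ
    have hfil : ζ'.filter (fun s => τ ∈ facetsOf s)
        = ζ.filter (fun s => τ ∈ facetsOf s) := by
      ext s
      simp only [mem_filter, hmem]
      constructor
      · rintro ⟨⟨hs, _⟩, hts⟩; exact ⟨hs, hts⟩
      · rintro ⟨hs, hts⟩
        refine ⟨⟨hs, ?_⟩, hts⟩
        have hs₀ζ := hsub hs₀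
        have hconn : ConnIn q ζ σ s₀ := ((hmem s₀).1 hs₀).2
        have hτcard : τ.card = q := by
          rw [facetsOf, mem_filter] at hτs₀
          have := (hζ s₀ hs₀ζ).2
          omega
        have hτsub₀ : τ ⊆ s₀ := by
          rw [facetsOf, mem_filter, mem_powerset] at hτs₀; exact hτs₀.1
        have hτsubs : τ ⊆ s := by
          rw [facetsOf, mem_filter, mem_powerset] at hts; exact hts.1
        exact hconn.tail ⟨hs₀ζ, hs, τ, hτcard, hτsub₀, hτsubs⟩
    have hτbd : τ ∈ bdry ζ := by
      rw [bdry, mem_filter, mem_biUnion]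
      exact ⟨⟨s₀, hsub hs₀, hτs₀⟩, hfil ▸ hodd⟩
    rw [hcyc] at hτbd
    exact absurd hτbd (notMem_empty τ)
  · -- connectivity
    intro τ₁ h₁ τ₂ h₂
    have c₁ : ConnIn q ζ' σ τ₁ := hlift τ₁ ((hmem τ₁).1 h₁).2
    have c₂ : ConnIn q ζ' σ τ₂ := hlift τ₂ ((hmem τ₂).1 h₂).2
    have hsymm' : Symmetric (fun a b : Finset V =>
        a ∈ ζ' ∧ b ∈ ζ' ∧ ∃ ρ : Finset V, ρ.card = q ∧ ρ ⊆ a ∧ ρ ⊆ b) := by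
      rintro a b ⟨ha, hb, ρ, hc, hra, hrb⟩
      exact ⟨hb, ha, ρ, hc, hrb, hra⟩
    exact Relation.ReflTransGen.trans ((@Relation.ReflTransGen.symmetric _ _ ⟨fun _ _ h => hsymm' h⟩).symm _ _ c₁) c₂
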